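/- Fix A, a, b ∈ ℝ and define, on the open set {(q',p',τ',π') ∈ ℝ⁴ : q' > b and q' ≠ 0}, the functions H'(q',p',τ',π') = π' − A e^{(2/3)τ'} (q'−b)^{−2/3} and φ'(q',p',τ',π') = p' − a q'^{−2} + A e^{(2/3)τ'} (q'−b)^{−5/3}. Then the canonical Poisson bracket {H', φ'} vanishes identically on this set. -/

import Mathlib

/-- Canonical Poisson bracket on ℝ⁴ with coordinates (q,p,τ,π):
{F,G} = ∂F/∂q ∂G/∂p − ∂F/∂p ∂G/∂q + ∂F/∂τ ∂G/∂π − ∂F/∂π ∂G/∂τ. -/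
noncomputable def pb4 (F G : ℝ → ℝ → ℝ → ℝ → ℝ) (q p τ π : ℝ) : ℝ :=
  deriv (fun x => F x p τ π) q * deriv (fun x => G q x τ π) p
  - deriv (fun x => F q x τ π) p * deriv (fun x => G x p τ π) q
  + deriv (fun x => F q p x π) τ * deriv (fun x => G q p τ x) π
  - deriv (fun x => F q p τ x) π * deriv (fun x => G q p x π) τ

/-- The van der Waals constraints H' = π' − A e^{(2/3)τ'}(q'−b)^{−2/3} and
φ' = p' − a q'^{−2} + A e^{(2/3)τ'}(q'−b)^{−5/3} are first-class: {H',φ'} = 0. -/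
theorem stmt_11 (A a b : ℝ) (H' φ' : ℝ → ℝ → ℝ → ℝ → ℝ)
    (hH' : ∀ q' p' τ' π',
      H' q' p' τ' π' = π' - A * Real.exp ((2/3) * τ') * (q' - b) ^ (-(2:ℝ)/3))
    (hφ' : ∀ q' p' τ' π',
      φ' q' p' τ' π' = p' - a / q' ^ 2 + A * Real.exp ((2/3) * τ') * (q' - b) ^ (-(5:ℝ)/3)) :
    ∀ q' p' τ' π' : ℝ, b < q' → q' ≠ 0 → pb4 H' φ' q' p' τ' π' = 0 := by
  intro q p τ π hb hq
  have hqb : q - b ≠ 0 := sub_ne_zero.2 (ne_of_gt hb)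
  -- ∂H'/∂q
  have hHq : HasDerivAt (fun x => H' x p τ π)
      (-(A * Real.exp ((2/3) * τ) * (1 * (-(2:ℝ)/3) * (q - b) ^ (-(2:ℝ)/3 - 1)))) q := by
    simp only [hH']
    simpa using (hasDerivAt_const q π).fun_sub
      ((((hasDerivAt_id q).sub_const b).rpow_const (Or.inl hqb)).const_mul
        (A * Real.exp ((2/3) * τ)))
  -- ∂H'/∂p = 0
  have hHp : HasDerivAt (fun x => H' q x τ π) 0 p := by
    simp only [hH']; exact hasDerivAt_const p _
  -- ∂H'/∂π = 1
  have hHpi : HasDerivAt (fun x => H' q p τ x) 1 π := by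
    simp only [hH']
    simpa using (hasDerivAt_id π).sub_const (A * Real.exp ((2/3) * τ) * (q - b) ^ (-(2:ℝ)/3))
  -- ∂φ'/∂p = 1
  have hφp : HasDerivAt (fun x => φ' q x τ π) 1 p := by
    simp only [hφ']
    simpa using ((hasDerivAt_id p).sub_const (a / q ^ 2)).add_const
      (A * Real.exp ((2/3) * τ) * (q - b) ^ (-(5:ℝ)/3))
  -- ∂φ'/∂π = 0
  have hφpi : HasDerivAt (fun x => φ' q p τ x) 0 π := by
    simp only [hφ']; exact hasDerivAt_const π _
  -- ∂φ'/∂τ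
  have hφτ : HasDerivAt (fun x => φ' q p x π)
      (A * (Real.exp ((2/3) * τ) * (2/3)) * (q - b) ^ (-(5:ℝ)/3)) τ := by
    simp only [hφ']
    have he : HasDerivAt (fun x : ℝ => Real.exp ((2/3) * x))
        (Real.exp ((2/3) * τ) * (2/3)) τ := by
      simpa using ((hasDerivAt_id τ).const_mul (2/3 : ℝ)).exp
    simpa using (hasDerivAt_const τ (p - a / q ^ 2)).fun_add
      (((he.const_mul A)).mul_const ((q - b) ^ (-(5:ℝ)/3)))
  have key : (-(2:ℝ)/3 - 1) = (-(5:ℝ)/3) := by norm_num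
  unfold pb4
  rw [hHq.deriv, hHp.deriv, hHpi.deriv, hφp.deriv, hφpi.deriv, hφτ.deriv, key]
  ring
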